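/- Let X be a Tychonoff (completely regular Hausdorff) space that is not countably compact, and let f₀ ∈ C(X) be the zero function. If {x_n : n ∈ ω} is an infinite subset of X with no accumulation point, then f₀ belongs to the τ_Γ-closure of the set L = {g ∈ C(X) : g(x_n) > 0 for all n ∈ ω}, but f₀ does not belong to the τ_Γ-closure of any countable subset of L. -/

import Mathlib

open TopologicalSpace Set

/-- The graph of a continuous map, as a subset of `X × Y`. -/
def graphSet {X Y : Type*} [TopologicalSpace X] [TopologicalSpace Y] (f : C(X, Y)) :
    Set (X × Y) := {p | p.2 = f p.1}

/-- The graph topology `τ_Γ` on `C(X, Y)`, generated by the sets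
`F_G = {f | graph f ⊆ G}` for `G` open in `X × Y`. -/
def graphTopology (X Y : Type*) [TopologicalSpace X] [TopologicalSpace Y] :
    TopologicalSpace C(X, Y) :=
  generateFrom {S | ∃ G : Set (X × Y), IsOpen G ∧ S = {f : C(X, Y) | graphSet f ⊆ G}}

-- key construction lemma
lemma key_construction (X : Type*) [TopologicalSpace X] [T35Space X]
    (x : ℕ → X) (G : Set (X × ℝ)) (hG : IsOpen G) (h0 : ∀ z : X, (z, (0:ℝ)) ∈ G) :
    ∃ g : C(X, ℝ), (∀ n, 0 < g (x n)) ∧ ∀ z, (z, g z) ∈ G := by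
  -- choose neighborhoods and epsilons
  have hWε : ∀ n, ∃ (W : Set X) (ε : ℝ), IsOpen W ∧ x n ∈ W ∧ 0 < ε ∧
      ∀ z ∈ W, ∀ t : ℝ, |t| < ε → (z, t) ∈ G := by
    intro n
    obtain ⟨u, v, hu, hv, hxu, h0v, huv⟩ := isOpen_prod_iff.1 hG (x n) 0 (h0 (x n))
    obtain ⟨ε, hε, hball⟩ := Metric.isOpen_iff.1 hv 0 h0v
    refine ⟨u, ε, hu, hxu, hε, fun z hz t ht => huv ⟨hz, hball ?_⟩⟩
    simpa [Real.dist_eq] using ht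
  choose W ε hWopen hxW hεpos hWG using hWε
  -- bump functions
  have hφ : ∀ n, ∃ φ : X → ℝ, Continuous φ ∧ φ (x n) = 1 ∧
      (∀ z, z ∉ W n → φ z = 0) ∧ ∀ z, φ z ∈ Icc (0:ℝ) 1 := by
    intro n
    obtain ⟨f, hf, hfx, hfK⟩ := CompletelyRegularSpace.completely_regular (x n) (W n)ᶜ
      (hWopen n).isClosed_compl (by simpa using hxW n)
    refine ⟨fun z => 1 - (f z : ℝ), by continuity, by simp [hfx], fun z hz => ?_, fun z => ?_⟩
    · have : f z = 1 := hfK hz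
      simp [this]
    · constructor
      · have := (f z).2.2; simp; exact this
      · have := (f z).2.1; simp; linarith
  choose φ hφc hφ1 hφ0 hφmem using hφ
  -- δ n = min of ε over [0..n]
  set δ : ℕ → ℝ := fun n => (Finset.range (n + 1)).inf' ⟨0, by simp⟩ ε with hδ
  have hδle : ∀ m n, m ≤ n → δ n ≤ ε m := fun m n h =>
    Finset.inf'_le _ (Finset.mem_range.2 (Nat.lt_succ_of_le h))
  have hδpos : ∀ n, 0 < δ n := fun n =>
    (Finset.lt_inf'_iff _).2 fun b _ => hεpos b
  -- the coefficients
  set c : ℕ → ℝ := fun n => (1/2 : ℝ) ^ (n + 2) * δ n with hc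
  have hcpos : ∀ n, 0 < c n := fun n =>
    mul_pos (by positivity) (hδpos n)
  have hgeo : Summable (fun n : ℕ => (1/2 : ℝ) ^ n) :=
    summable_geometric_of_lt_one (by norm_num) (by norm_num)
  have hsum_geom : Summable (fun n : ℕ => (1/2 : ℝ) ^ (n + 2) * δ 0) := by
    refine (hgeo.mul_right ((1/2:ℝ)^2 * δ 0)).congr fun n => ?_
    rw [pow_add]; ring
  have hcle : ∀ n, c n ≤ (1/2 : ℝ) ^ (n + 2) * δ 0 := by
    intro n
    have : δ n ≤ ε 0 := hδle 0 n (Nat.zero_le n)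
    have h0' : δ 0 = ε 0 := by simp [hδ]
    rw [h0']
    exact mul_le_mul_of_nonneg_left this (by positivity)
  have hterm_nonneg : ∀ n z, 0 ≤ c n * φ n z := fun n z =>
    mul_nonneg (hcpos n).le (hφmem n z).1
  have hterm_le : ∀ n z, c n * φ n z ≤ (1/2 : ℝ) ^ (n + 2) * δ 0 := by
    intro n z
    calc c n * φ n z ≤ c n * 1 := mul_le_mul_of_nonneg_left (hφmem n z).2 (hcpos n).le
    _ = c n := mul_one _
    _ ≤ _ := hcle n
  have hsz : ∀ z : X, Summable (fun n => c n * φ n z) := fun z =>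
    Summable.of_nonneg_of_le (fun n => hterm_nonneg n z) (fun n => hterm_le n z) hsum_geom
  -- the function
  have hgc : Continuous (fun z : X => ∑' n, c n * φ n z) := by
    apply continuous_tsum (fun n => (continuous_const.mul (hφc n))) hsum_geom
    intro n z
    rw [Real.norm_eq_abs]; change |c n * φ n z| ≤ _; rw [abs_of_nonneg (hterm_nonneg n z)]
    exact hterm_le n z
  refine ⟨⟨fun z => ∑' n, c n * φ n z, hgc⟩, fun k => ?_, fun z => ?_⟩
  · simp only [ContinuousMap.coe_mk]
    have : c k * φ k (x k) ≤ ∑' n, c n * φ n (x k) :=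
      Summable.le_tsum (hsz (x k)) k (fun j _ => hterm_nonneg j (x k))
    have hk : c k * φ k (x k) = c k := by rw [hφ1 k, mul_one]
    linarith [hcpos k]
  · simp only [ContinuousMap.coe_mk]
    by_cases h : ∀ n, φ n z = 0
    · have : (fun n => c n * φ n z) = fun _ => 0 := by funext n; rw [h n, mul_zero]
      rw [this, tsum_zero]
      exact h0 z
    · push_neg at h
      have hex : ∃ n, φ n z ≠ 0 := h
      set n₀ := Nat.find hex with hn₀
      have hzW : z ∈ W n₀ := by
        by_contra hzw
        exact Nat.find_spec hex (hφ0 n₀ z hzw)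
      have hnonneg : 0 ≤ ∑' n, c n * φ n z := tsum_nonneg (fun n => hterm_nonneg n z)
      have hub : ∀ n, c n * φ n z ≤ (1/2 : ℝ) ^ (n + 2) * ε n₀ := by
        intro n
        rcases lt_or_ge n n₀ with hlt | hle
        · have : φ n z = 0 := by
            by_contra hne
            exact Nat.find_min hex hlt hne
          rw [this, mul_zero]
          exact mul_nonneg (by positivity) (hεpos n₀).le
        · have h1 : δ n ≤ ε n₀ := hδle n₀ n hle
          calc c n * φ n z ≤ c n := by
                nlinarith [(hφmem n z).1, (hφmem n z).2, hcpos n]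
          _ ≤ (1/2 : ℝ) ^ (n + 2) * ε n₀ := mul_le_mul_of_nonneg_left h1 (by positivity)
      have hsumr : Summable (fun n : ℕ => (1/2 : ℝ) ^ (n + 2) * ε n₀) := by
        refine (hgeo.mul_right ((1/2:ℝ)^2 * ε n₀)).congr fun n => ?_
        rw [pow_add]; ring
      have hle := Summable.tsum_le_tsum hub (hsz z) hsumr
      have hval : ∑' n : ℕ, (1/2 : ℝ) ^ (n + 2) * ε n₀ = (1/2) * ε n₀ := by
        rw [tsum_mul_right]
        congr 1
        have : ∀ n : ℕ, (1/2 : ℝ) ^ (n + 2) = (1/2:ℝ)^n * (1/4) := by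
          intro n; rw [pow_add]; norm_num
        rw [tsum_congr this, tsum_mul_right,
          tsum_geometric_of_lt_one (by norm_num) (by norm_num)]
        norm_num
      apply hWG n₀ z hzW
      rw [abs_of_nonneg hnonneg]
      calc ∑' n, c n * φ n z ≤ (1/2) * ε n₀ := by rw [← hval]; exact hle
      _ < ε n₀ := by linarith [hεpos n₀]

-- basis lemma
lemma basis_lemma {X : Type*} [TopologicalSpace X] (O : Set C(X, ℝ))
    (hO : GenerateOpen {S | ∃ G : Set (X × ℝ), IsOpen G ∧ S = {f : C(X, ℝ) | graphSet f ⊆ G}} O)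
    (h0 : (0 : C(X, ℝ)) ∈ O) :
    ∃ G : Set (X × ℝ), IsOpen G ∧ (∀ z, (z, (0:ℝ)) ∈ G) ∧
      {f : C(X, ℝ) | graphSet f ⊆ G} ⊆ O := by
  induction hO with
  | basic S hS =>
      obtain ⟨G, hG, rfl⟩ := hS
      exact ⟨G, hG, fun z => h0 (show (z, (0:ℝ)) ∈ graphSet (0:C(X,ℝ)) by simp [graphSet]),
        subset_rfl⟩
  | univ => exact ⟨univ, isOpen_univ, fun z => mem_univ _, fun f _ => mem_univ f⟩
  | inter s t _ _ ihs iht =>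
      obtain ⟨G₁, hG₁, h0₁, hs₁⟩ := ihs h0.1
      obtain ⟨G₂, hG₂, h0₂, hs₂⟩ := iht h0.2
      refine ⟨G₁ ∩ G₂, hG₁.inter hG₂, fun z => ⟨h0₁ z, h0₂ z⟩, fun f hf => ?_⟩
      exact ⟨hs₁ (fun p hp => (hf hp).1), hs₂ (fun p hp => (hf hp).2)⟩
  | sUnion S _ ih =>
      obtain ⟨t, htS, h0t⟩ := h0
      obtain ⟨G, hG, h0G, hsub⟩ := ih t htS h0t
      exact ⟨G, hG, h0G, fun f hf => ⟨t, htS, hsub hf⟩⟩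


/-- A topological space is countably compact if every countable open cover has a
finite subcover. -/
def CountablyCompact (X : Type*) [TopologicalSpace X] : Prop :=
  ∀ U : ℕ → Set X, (∀ n, IsOpen (U n)) → (⋃ n, U n) = Set.univ →
    ∃ t : Finset ℕ, (⋃ n ∈ t, U n) = Set.univ

/-- let `X` be Tychonoff and not countably compact, and let
`{xₙ : n ∈ ω}` be an infinite subset of `X` with no accumulation point (i.e. every
point `z` has a neighborhood containing no point of `{xₙ}` other than `z`). Then
the zero function belongs to the `τ_Γ`-closure of
`L = {g ∈ C(X) : g xₙ > 0 for all n}`, but not to the `τ_Γ`-closure of any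
countable subset of `L`. -/
theorem zero_mem_closure_not_mem_countable_closure (X : Type*) [TopologicalSpace X]
    [T35Space X] (hX : ¬ CountablyCompact X)
    (x : ℕ → X) (hinj : Function.Injective x)
    (hacc : ∀ z : X, ∃ U ∈ nhds z, ∀ a ∈ Set.range x, a ∈ U → a = z) :
    (0 : C(X, ℝ)) ∈ @closure C(X, ℝ) (graphTopology X ℝ)
        {g : C(X, ℝ) | ∀ n, 0 < g (x n)} ∧
      ∀ L' ⊆ {g : C(X, ℝ) | ∀ n, 0 < g (x n)}, L'.Countable →
        (0 : C(X, ℝ)) ∉ @closure C(X, ℝ) (graphTopology X ℝ) L' := by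
  constructor
  · rw [@mem_closure_iff C(X, ℝ) (graphTopology X ℝ) _ _]
    intro o ho h0
    obtain ⟨G, hG, h0G, hsub⟩ := basis_lemma o ho h0
    obtain ⟨g, hg1, hg2⟩ := key_construction X x G hG h0G
    refine ⟨g, hsub fun p hp => ?_, hg1⟩
    have : p = (p.1, g p.1) := Prod.ext rfl hp
    rw [this]
    exact hg2 p.1
  · intro L' hL'sub hL'c hmem
    rcases L'.eq_empty_or_nonempty with rfl | hne
    · rw [@closure_empty _ (graphTopology X ℝ)] at hmem
      exact hmem
    obtain ⟨g, hgr⟩ := hL'c.exists_eq_range hne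
    set D : Set (X × ℝ) := Set.range (fun k => (x k, g k (x k))) with hD
    have hgL : ∀ k, g k ∈ {h : C(X, ℝ) | ∀ n, 0 < h (x n)} :=
      fun k => hL'sub (hgr ▸ Set.mem_range_self k)
    have hDopen : IsOpen Dᶜ := by
      rw [isOpen_iff_forall_mem_open]
      rintro ⟨z, t⟩ hzt
      obtain ⟨U, hU, hUx⟩ := hacc z
      by_cases hz : z ∈ Set.range x
      · obtain ⟨m, rfl⟩ := hz
        have hne' : t ≠ g m (x m) := by
          intro h
          exact hzt ⟨m, by rw [h]⟩
        refine ⟨interior U ×ˢ Metric.ball t (|t - g m (x m)|), ?_, ?_, ?_⟩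
        · rintro ⟨a, s⟩ ⟨ha, hs⟩ ⟨k, hk⟩
          have hax : a = x k := (congrArg Prod.fst hk).symm
          have hkm : x k = x m := hUx (x k) ⟨k, rfl⟩ (by rw [← hax]; exact interior_subset ha)
          have : k = m := hinj hkm
          subst this
          have hsval : s = g k (x k) := (congrArg Prod.snd hk).symm
          rw [Metric.mem_ball, Real.dist_eq, hsval, hkm] at hs
          rw [hkm] at hs
          rw [abs_sub_comm] at hs
          exact lt_irrefl _ hs
        · exact isOpen_interior.prod Metric.isOpen_ball
        · refine ⟨mem_interior_iff_mem_nhds.2 hU, ?_⟩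
          simp [Real.dist_eq, abs_pos, sub_ne_zero.2 hne']
      · refine ⟨interior U ×ˢ Set.univ, ?_, isOpen_interior.prod isOpen_univ, ?_⟩
        · rintro ⟨a, s⟩ ⟨ha, -⟩ ⟨k, hk⟩
          have hax : a = x k := (congrArg Prod.fst hk).symm
          exact hz ⟨k, (hUx (x k) ⟨k, rfl⟩ (by rw [← hax]; exact interior_subset ha))⟩
        · exact ⟨mem_interior_iff_mem_nhds.2 hU, mem_univ _⟩
    have hFGopen : @IsOpen C(X, ℝ) (graphTopology X ℝ) {f : C(X, ℝ) | graphSet f ⊆ Dᶜ} :=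
      GenerateOpen.basic _ ⟨Dᶜ, hDopen, rfl⟩
    have h0FG : (0 : C(X, ℝ)) ∈ {f : C(X, ℝ) | graphSet f ⊆ Dᶜ} := by
      rintro ⟨z, t⟩ ht ⟨k, hk⟩
      have ht' : t = 0 := ht
      have : t = g k (x k) := (congrArg Prod.snd hk).symm
      rw [ht'] at this
      exact absurd this.symm (ne_of_gt (hgL k k))
    obtain ⟨h, hhFG, hhL'⟩ := (@mem_closure_iff C(X, ℝ) (graphTopology X ℝ) _ _).1 hmem
      _ hFGopen h0FG
    rw [hgr] at hhL'
    obtain ⟨k, rfl⟩ := hhL'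
    exact hhFG (show ((x k, g k (x k)) : X × ℝ) ∈ graphSet (g k) from rfl) ⟨k, rfl⟩
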